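/- Let U be an open subset of a finite-dimensional real vector space E, g a smooth assignment of a (possibly degenerate) symmetric bilinear form g_p on E to each p ∈ U, X, Y : U → E smooth vector fields, and W : U → E a smooth radical vector field, i.e., g_p(W(p), v) = 0 for every p ∈ U and v ∈ E. Then the Koszul form satisfies K(X, Y, W) = K(Y, X, W) = −K(X, W, Y) = −K(Y, W, X). -/

import Mathlib

variable {E : Type*} [NormedAddCommGroup E] [NormedSpace ℝ E] [FiniteDimensional ℝ E]

/-- The action `(Xf)(p) = df_p(X(p))` of a vector field on a function. -/
noncomputable def vAct (X : E → E) (f : E → ℝ) : E → ℝ := fun p => fderiv ℝ f p (X p)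

/-- The Lie bracket `[X,Y](p) = dY_p(X(p)) − dX_p(Y(p))` of vector fields. -/
noncomputable def vBracket (X Y : E → E) : E → E :=
  fun p => fderiv ℝ Y p (X p) - fderiv ℝ X p (Y p)

/-- The function `p ↦ g_p(Y(p), Z(p))`. -/
noncomputable def gFun (g : E → E →L[ℝ] E →L[ℝ] ℝ) (Y Z : E → E) : E → ℝ := fun p => g p (Y p) (Z p)

/-- The Koszul form
`K(X,Y,Z) := ½{X g(Y,Z) + Y g(Z,X) − Z g(X,Y) − g(X,[Y,Z]) + g(Y,[Z,X]) + g(Z,[X,Y])}`. -/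
noncomputable def koszul (g : E → E →L[ℝ] E →L[ℝ] ℝ) (X Y Z : E → E) : E → ℝ := fun p =>
  (1/2 : ℝ) * (vAct X (gFun g Y Z) p + vAct Y (gFun g Z X) p - vAct Z (gFun g X Y) p
    - gFun g X (vBracket Y Z) p + gFun g Y (vBracket Z X) p + gFun g Z (vBracket X Y) p)

/-- if `W` is a radical vector field (`g_p(W(p), v) = 0` for all
`p ∈ U`, `v ∈ E`), then
`K(X, Y, W) = K(Y, X, W) = −K(X, W, Y) = −K(Y, W, X)` on `U`. -/
theorem koszul_radical_props
    (U : Set E) (hU : IsOpen U)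
    (g : E → E →L[ℝ] E →L[ℝ] ℝ) (hg : ContDiffOn ℝ (⊤ : ℕ∞) g U)
    (hsymm : ∀ p : E, ∀ u v : E, g p u v = g p v u)
    (X Y W : E → E) (hX : ContDiffOn ℝ (⊤ : ℕ∞) X U) (hY : ContDiffOn ℝ (⊤ : ℕ∞) Y U)
    (hW : ContDiffOn ℝ (⊤ : ℕ∞) W U)
    (hWrad : ∀ p ∈ U, ∀ v : E, g p (W p) v = 0) :
    ∀ p ∈ U, koszul g X Y W p = koszul g Y X W p ∧
      koszul g X Y W p = -koszul g X W Y p ∧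
      koszul g X Y W p = -koszul g Y W X p := by
  intro p hp
  have hmem : U ∈ nhds p := hU.mem_nhds hp
  have hd : ∀ f : E → ℝ, (∀ q ∈ U, f q = 0) → fderiv ℝ f p = 0 := by
    intro f hf
    have h : f =ᶠ[nhds p] (fun _ => (0 : ℝ)) := Filter.eventuallyEq_of_mem hmem hf
    rw [h.fderiv_eq]
    exact fderiv_const_apply 0
  have hz : ∀ A : E → E, ∀ q ∈ U, gFun g A W q = 0 := fun A q hq => by
    simp only [gFun]; rw [hsymm]; exact hWrad q hq _
  have hz' : ∀ A : E → E, ∀ q ∈ U, gFun g W A q = 0 := fun A q hq => hWrad q hq _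
  have h1 : fderiv ℝ (gFun g Y W) p = 0 := hd _ (hz Y)
  have h2 : fderiv ℝ (gFun g W X) p = 0 := hd _ (hz' X)
  have h3 : fderiv ℝ (gFun g X W) p = 0 := hd _ (hz X)
  have h4 : fderiv ℝ (gFun g W Y) p = 0 := hd _ (hz' Y)
  have hYX : gFun g Y X = gFun g X Y := funext fun q => hsymm q _ _
  simp only [koszul, vAct, hYX, h1, h2, h3, h4, ContinuousLinearMap.zero_apply,
    gFun, vBracket, map_sub, hWrad p hp]
  refine ⟨by ring, by ring, by ring⟩
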